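/- Let U ⊆ ℝ × ℝ be open and convex. Let Q₁, ν₁, u₁ : U → E be smooth with ‖u₁ k‖ = 1, ‖ν₁ k‖ = 1 and ⟪ν₁ k, Dᵢ Q₁ k⟫ = 0 for all k ∈ U and i = 1, 2, and define the once-reflected directions u₂ k = u₁ k − 2 ⟪u₁ k, ν₁ k⟫ • ν₁ k. Let s : U → ℝ be smooth, set Q₂ k = Q₁ k + s k • u₂ k, let ν₂ : U → E be smooth with ‖ν₂ k‖ = 1 and ⟪ν₂ k, Dᵢ Q₂ k⟫ = 0 for all k ∈ U and i = 1, 2, and define the twice-reflected directions u₃ k = u₂ k − 2 ⟪u₂ k, ν₂ k⟫ • ν₂ k. If the incident family (Q₁, u₁) is normal, then the family (Q₂, u₃) obtained after the two successive reflections is normal. (Malus' theorem for two successive reflections on smooth mirrors.) -/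

import Mathlib

open RealInnerProductSpace

noncomputable section

/-- The Euclidean affine space in which light propagates. -/
abbrev E : Type := EuclideanSpace ℝ (Fin 3)

/-- Partial derivative in the first coordinate direction of `ℝ × ℝ`. -/
def D1 {F : Type*} [NormedAddCommGroup F] [NormedSpace ℝ F] (f : ℝ × ℝ → F) (k : ℝ × ℝ) : F :=
  fderiv ℝ f k (1, 0)

/-- Partial derivative in the second coordinate direction of `ℝ × ℝ`. -/
def D2 {F : Type*} [NormedAddCommGroup F] [NormedSpace ℝ F] (f : ℝ × ℝ → F) (k : ℝ × ℝ) : F :=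
  fderiv ℝ f k (0, 1)

/-- A rank-2 family of oriented lines `(P, u)` is *normal* if there is a smooth
function `lam` such that the surface `k ↦ P k + lam k • u k` is orthogonal to all
the lines of the family. -/
def IsNormal (U : Set (ℝ × ℝ)) (P u : ℝ × ℝ → E) : Prop :=
  ∃ lam : ℝ × ℝ → ℝ, ContDiffOn ℝ (⊤ : ℕ∞) lam U ∧
    ∀ k ∈ U, ⟪u k, D1 (fun k => P k + lam k • u k) k⟫ = 0 ∧
             ⟪u k, D2 (fun k => P k + lam k • u k) k⟫ = 0

/-- If `w` has unit norm on an open set then `⟪w k, Dw k v⟫ = 0` at points of the set. -/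
lemma inner_fderiv_self_eq_zero {U : Set (ℝ × ℝ)} (hU : IsOpen U) {w : ℝ × ℝ → E}
    {k : ℝ × ℝ} (hk : k ∈ U) (hw : DifferentiableAt ℝ w k)
    (hunit : ∀ x ∈ U, ‖w x‖ = 1) (v : ℝ × ℝ) : ⟪w k, fderiv ℝ w k v⟫ = 0 := by
  have h1 : (fun x => ⟪w x, w x⟫) =ᶠ[nhds k] fun _ => (1 : ℝ) := by
    filter_upwards [hU.mem_nhds hk] with x hx
    rw [real_inner_self_eq_norm_sq, hunit x hx]; norm_num
  have h3 : fderiv ℝ (fun x => ⟪w x, w x⟫) k v = 0 := by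
    rw [h1.fderiv_eq]; simp
  rw [fderiv_inner_apply ℝ hw hw] at h3
  have hc := real_inner_comm (w k) (fderiv ℝ w k v)
  linarith

lemma fderiv_add_smul_apply {f g : ℝ × ℝ → E} {c : ℝ × ℝ → ℝ} {k : ℝ × ℝ}
    (hf : DifferentiableAt ℝ f k) (hc : DifferentiableAt ℝ c k)
    (hg : DifferentiableAt ℝ g k) (v : ℝ × ℝ) :
    fderiv ℝ (fun x => f x + c x • g x) k v
      = fderiv ℝ f k v + fderiv ℝ c k v • g k + c k • fderiv ℝ g k v := by
  rw [fderiv_fun_add (g := fun x => c x • g x) hf (hc.smul hg), ContinuousLinearMap.add_apply, fderiv_fun_smul hc hg]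
  simp [ContinuousLinearMap.add_apply]
  module

theorem malus_two_reflections
    (U : Set (ℝ × ℝ)) (hU : IsOpen U) (hconv : Convex ℝ U)
    (Q₁ nu₁ u₁ : ℝ × ℝ → E)
    (hQ₁ : ContDiffOn ℝ (⊤ : ℕ∞) Q₁ U) (hnu₁ : ContDiffOn ℝ (⊤ : ℕ∞) nu₁ U)
    (hu₁ : ContDiffOn ℝ (⊤ : ℕ∞) u₁ U)
    (hu₁unit : ∀ k ∈ U, ‖u₁ k‖ = 1) (hnu₁unit : ∀ k ∈ U, ‖nu₁ k‖ = 1)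
    (horth₁ : ∀ k ∈ U, ⟪nu₁ k, D1 Q₁ k⟫ = 0 ∧ ⟪nu₁ k, D2 Q₁ k⟫ = 0)
    (u₂ : ℝ × ℝ → E)
    (hu₂ : ∀ k, u₂ k = u₁ k - (2 * ⟪u₁ k, nu₁ k⟫) • nu₁ k)
    (s : ℝ × ℝ → ℝ) (hs : ContDiffOn ℝ (⊤ : ℕ∞) s U)
    (Q₂ : ℝ × ℝ → E) (hQ₂def : ∀ k, Q₂ k = Q₁ k + s k • u₂ k)
    (nu₂ : ℝ × ℝ → E) (hnu₂ : ContDiffOn ℝ (⊤ : ℕ∞) nu₂ U)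
    (hnu₂unit : ∀ k ∈ U, ‖nu₂ k‖ = 1)
    (horth₂ : ∀ k ∈ U, ⟪nu₂ k, D1 Q₂ k⟫ = 0 ∧ ⟪nu₂ k, D2 Q₂ k⟫ = 0)
    (u₃ : ℝ × ℝ → E)
    (hu₃ : ∀ k, u₃ k = u₂ k - (2 * ⟪u₂ k, nu₂ k⟫) • nu₂ k)
    (hnormal : IsNormal U Q₁ u₁) :
    IsNormal U Q₂ u₃ := by
  obtain ⟨lam, hlam, hlamorth⟩ := hnormal
  -- unit norms of the reflected directions
  have hu₂unit : ∀ k ∈ U, ‖u₂ k‖ = 1 := by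
    intro k hk
    have h : ⟪u₂ k, u₂ k⟫ = 1 := by
      rw [hu₂ k]
      have h1 : ⟪u₁ k, u₁ k⟫ = 1 := by
        rw [real_inner_self_eq_norm_sq, hu₁unit k hk]; norm_num
      have h2 : ⟪nu₁ k, nu₁ k⟫ = 1 := by
        rw [real_inner_self_eq_norm_sq, hnu₁unit k hk]; norm_num
      simp only [inner_sub_sub_self, real_inner_smul_left, real_inner_smul_right]
      rw [real_inner_comm (nu₁ k) (u₁ k)] at *
      rw [h1, h2]; ring
    have hsq : ‖u₂ k‖ ^ 2 = 1 := by
      rw [← real_inner_self_eq_norm_sq, h]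
    rw [← Real.sqrt_sq (norm_nonneg (u₂ k)), hsq, Real.sqrt_one]
  have hu₃unit : ∀ k ∈ U, ‖u₃ k‖ = 1 := by
    intro k hk
    have h : ⟪u₃ k, u₃ k⟫ = 1 := by
      rw [hu₃ k]
      have h1 : ⟪u₂ k, u₂ k⟫ = 1 := by
        rw [real_inner_self_eq_norm_sq, hu₂unit k hk]; norm_num
      have h2 : ⟪nu₂ k, nu₂ k⟫ = 1 := by
        rw [real_inner_self_eq_norm_sq, hnu₂unit k hk]; norm_num
      simp only [inner_sub_sub_self, real_inner_smul_left, real_inner_smul_right]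
      rw [real_inner_comm (nu₂ k) (u₂ k)] at *
      rw [h1, h2]; ring
    have hsq : ‖u₃ k‖ ^ 2 = 1 := by
      rw [← real_inner_self_eq_norm_sq, h]
    rw [← Real.sqrt_sq (norm_nonneg (u₃ k)), hsq, Real.sqrt_one]
  refine ⟨fun k => lam k - s k, hlam.sub hs, ?_⟩
  intro k hk
  -- differentiability at k
  have hkn : U ∈ nhds k := hU.mem_nhds hk
  have dQ₁ : DifferentiableAt ℝ Q₁ k :=
    (hQ₁.contDiffAt hkn).differentiableAt (by simp)
  have dnu₁ : DifferentiableAt ℝ nu₁ k :=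
    (hnu₁.contDiffAt hkn).differentiableAt (by simp)
  have du₁ : DifferentiableAt ℝ u₁ k :=
    (hu₁.contDiffAt hkn).differentiableAt (by simp)
  have ds : DifferentiableAt ℝ s k :=
    (hs.contDiffAt hkn).differentiableAt (by simp)
  have dlam : DifferentiableAt ℝ lam k :=
    (hlam.contDiffAt hkn).differentiableAt (by simp)
  have dnu₂ : DifferentiableAt ℝ nu₂ k :=
    (hnu₂.contDiffAt hkn).differentiableAt (by simp)
  obtain rfl : u₂ = fun k => u₁ k - (2 * ⟪u₁ k, nu₁ k⟫) • nu₁ k := funext hu₂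
  obtain rfl : Q₂ = fun k => Q₁ k + s k • (fun k => u₁ k - (2 * ⟪u₁ k, nu₁ k⟫) • nu₁ k) k :=
    funext hQ₂def
  set u₂ : ℝ × ℝ → E := fun k => u₁ k - (2 * ⟪u₁ k, nu₁ k⟫) • nu₁ k with hu₂def
  set Q₂ : ℝ × ℝ → E := fun k => Q₁ k + s k • u₂ k with hQ₂def'
  obtain rfl : u₃ = fun k => u₂ k - (2 * ⟪u₂ k, nu₂ k⟫) • nu₂ k := funext hu₃
  set u₃ : ℝ × ℝ → E := fun k => u₂ k - (2 * ⟪u₂ k, nu₂ k⟫) • nu₂ k with hu₃def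
  have du₂ : DifferentiableAt ℝ u₂ k :=
    du₁.sub ((((du₁.inner ℝ dnu₁).const_mul 2)).smul dnu₁)
  have dQ₂ : DifferentiableAt ℝ Q₂ k := dQ₁.add (ds.smul du₂)
  have du₃ : DifferentiableAt ℝ u₃ k :=
    du₂.sub ((((du₂.inner ℝ dnu₂).const_mul 2)).smul dnu₂)
  -- the key pointwise computation, for an arbitrary direction v
  have key : ∀ v : ℝ × ℝ, ⟪nu₁ k, fderiv ℝ Q₁ k v⟫ = 0 →
      ⟪nu₂ k, fderiv ℝ Q₂ k v⟫ = 0 →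
      ⟪u₁ k, fderiv ℝ (fun x => Q₁ x + lam x • u₁ x) k v⟫ = 0 →
      ⟪u₃ k, fderiv ℝ (fun x => Q₂ x + (lam x - s x) • u₃ x) k v⟫ = 0 := by
    intro v h1 h2 h3
    have e3 : fderiv ℝ (fun x => Q₁ x + lam x • u₁ x) k v
        = fderiv ℝ Q₁ k v + fderiv ℝ lam k v • u₁ k + lam k • fderiv ℝ u₁ k v :=
      fderiv_add_smul_apply dQ₁ dlam du₁ v
    have hu₁u : ⟪u₁ k, fderiv ℝ u₁ k v⟫ = 0 :=
      inner_fderiv_self_eq_zero hU hk du₁ hu₁unit v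
    have hu₂u : ⟪u₂ k, fderiv ℝ u₂ k v⟫ = 0 :=
      inner_fderiv_self_eq_zero hU hk du₂ hu₂unit v
    have hu₃u : ⟪u₃ k, fderiv ℝ u₃ k v⟫ = 0 :=
      inner_fderiv_self_eq_zero hU hk du₃ hu₃unit v
    have hu₁n : ⟪u₁ k, u₁ k⟫ = 1 := by
      rw [real_inner_self_eq_norm_sq, hu₁unit k hk]; norm_num
    have hu₃n : ⟪u₃ k, u₃ k⟫ = 1 := by
      rw [real_inner_self_eq_norm_sq, hu₃unit k hk]; norm_num
    -- from h3 :  ⟪u₁, DQ₁⟫ = - Dlam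
    have hA : ⟪u₁ k, fderiv ℝ Q₁ k v⟫ = - fderiv ℝ lam k v := by
      rw [e3] at h3
      simp only [inner_add_right, real_inner_smul_right, hu₁n, hu₁u] at h3
      linarith
    -- ⟪u₂, DQ₁⟫ = ⟪u₁, DQ₁⟫
    have hB : ⟪u₂ k, fderiv ℝ Q₁ k v⟫ = - fderiv ℝ lam k v := by
      rw [hu₂def]
      simp only [inner_sub_left, real_inner_smul_left, h1, hA]
      ring
    -- expand DQ₂
    have e2 : fderiv ℝ Q₂ k v
        = fderiv ℝ Q₁ k v + fderiv ℝ s k v • u₂ k + s k • fderiv ℝ u₂ k v := by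
      rw [hQ₂def']
      exact fderiv_add_smul_apply dQ₁ ds du₂ v
    have hu₂n : ⟪u₂ k, u₂ k⟫ = 1 := by
      rw [real_inner_self_eq_norm_sq, hu₂unit k hk]; norm_num
    have hC : ⟪u₂ k, fderiv ℝ Q₂ k v⟫ = - fderiv ℝ lam k v + fderiv ℝ s k v := by
      rw [e2]
      simp only [inner_add_right, real_inner_smul_right, hu₂n, hu₂u, hB]
      ring
    -- ⟪u₃, DQ₂⟫ = ⟪u₂, DQ₂⟫
    have hD : ⟪u₃ k, fderiv ℝ Q₂ k v⟫ = - fderiv ℝ lam k v + fderiv ℝ s k v := by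
      rw [hu₃def]
      simp only [inner_sub_left, real_inner_smul_left, h2, hC]
      ring
    -- final expansion
    have dmu : DifferentiableAt ℝ (fun x => lam x - s x) k := dlam.sub ds
    have e4 : fderiv ℝ (fun x => Q₂ x + (lam x - s x) • u₃ x) k v
        = fderiv ℝ Q₂ k v + fderiv ℝ (fun x => lam x - s x) k v • u₃ k
          + (lam k - s k) • fderiv ℝ u₃ k v :=
      fderiv_add_smul_apply dQ₂ dmu du₃ v
    have e5 : fderiv ℝ (fun x => lam x - s x) k v = fderiv ℝ lam k v - fderiv ℝ s k v := by
      rw [fderiv_fun_sub dlam ds]; simp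
    rw [e4, e5]
    simp only [inner_add_right, real_inner_smul_right, hu₃n, hu₃u, hD]
    ring
  obtain ⟨h11, h12⟩ := horth₁ k hk
  obtain ⟨h21, h22⟩ := horth₂ k hk
  obtain ⟨h31, h32⟩ := hlamorth k hk
  exact ⟨key (1, 0) h11 h21 h31, key (0, 1) h12 h22 h32⟩
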